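/- f-vector of the r-multichain subdivision of a simplex in low dimension (vertex count): if Δ is a (d−1)-dimensional simplicial complex with f-vector (f_{−1}, f_0, …, f_{d−1}), then the number of vertices of its r-multichain subdivision C^r(Δ) equals ∑_{l=0}^{d} (r^l − (r−1)^l) f_{l−1}(Δ). Equivalently, the number of r-multichains A_1 ⊆ A_2 ⊆ ⋯ ⊆ A_r of nonempty faces of Δ equals ∑_{l=1}^{d} (r^l − (r−1)^l) f_{l−1}(Δ). -/

import Mathlib

open Finset

theorem multichain_vertex_count {V : Type*} [DecidableEq V]
    (Δ : Finset (Finset V)) (d r : ℕ) (hr : 1 ≤ r)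
    (hdown : ∀ F ∈ Δ, ∀ E ⊆ F, E ∈ Δ)
    (hdim : ∀ F ∈ Δ, F.card ≤ d) :
    (Nat.card {A : Fin r → Finset V //
        (∀ i, A i ∈ Δ ∧ A i ≠ ∅) ∧ ∀ i j : Fin r, i ≤ j → A i ⊆ A j} : ℤ) =
      ∑ l ∈ Finset.range (d + 1),
        ((r : ℤ) ^ l - ((r : ℤ) - 1) ^ l) * ((Δ.filter fun F => F.card = l).card : ℤ) := by
  classical
  haveI : NeZero r := ⟨by omega⟩
  set L : Fin r := ⟨r - 1, by omega⟩ with hL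
  have hLe : ∀ i : Fin r, i ≤ L := fun i => by
    have := i.2
    simp only [Fin.le_def, hL]
    omega
  set S : Finset (Fin r → Finset V) :=
    (Fintype.piFinset fun _ : Fin r => Δ).filter
      (fun A => (∀ i, A i ≠ ∅) ∧ ∀ i j : Fin r, i ≤ j → A i ⊆ A j) with hS
  have hmemS : ∀ A, A ∈ S ↔
      ((∀ i, A i ∈ Δ ∧ A i ≠ ∅) ∧ ∀ i j : Fin r, i ≤ j → A i ⊆ A j) := by
    intro A
    simp only [hS, mem_filter, Fintype.mem_piFinset]
    constructor
    · rintro ⟨hpi, hne, hmono⟩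
      exact ⟨fun i => ⟨hpi i, hne i⟩, hmono⟩
    · rintro ⟨ha, hb⟩
      exact ⟨fun i => (ha i).1, fun i => (ha i).2, hb⟩
  have h1 : Nat.card {A : Fin r → Finset V //
      (∀ i, A i ∈ Δ ∧ A i ≠ ∅) ∧ ∀ i j : Fin r, i ≤ j → A i ⊆ A j} = S.card := by
    rw [← Nat.card_eq_finsetCard]
    exact Nat.card_congr (Equiv.subtypeEquivRight fun A => (hmemS A).symm)
  set t : Finset (Finset V) := Δ.filter (fun F => F ≠ ∅) with ht
  have h2 : S.card = ∑ F ∈ t, (S.filter fun A => A L = F).card := by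
    apply card_eq_sum_card_fiberwise
    intro A hA
    rw [Finset.mem_coe, hmemS] at hA
    simp only [ht, Finset.mem_coe, mem_filter]
    exact ⟨(hA.1 L).1, (hA.1 L).2⟩
  -- per-fiber bijection with functions
  have h3 : ∀ F ∈ t, (S.filter fun A => A L = F).card
      = (univ.filter fun g : {x // x ∈ F} → Fin r => ∃ v, g v = 0).card := by
    intro F hF
    simp only [ht, mem_filter] at hF
    apply card_bij'
      (i := fun A _ v =>
        if h : (univ.filter fun i : Fin r => v.1 ∈ A i).Nonempty
        then (univ.filter fun i : Fin r => v.1 ∈ A i).min' h else L)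
      (j := fun g _ i => (F.attach.filter fun v => g v ≤ i).image Subtype.val)
    · -- hi
      intro A hA
      simp only [mem_filter] at hA
      obtain ⟨hAS, hAL⟩ := hA
      rw [hmemS] at hAS
      obtain ⟨hne, hmono⟩ := hAS
      obtain ⟨w, hw⟩ := Finset.nonempty_of_ne_empty ((hne 0).2)
      have hwF : w ∈ F := hAL ▸ hmono 0 L (hLe 0) hw
      simp only [mem_filter, mem_univ, true_and]
      refine ⟨⟨w, hwF⟩, ?_⟩
      have hne' : (univ.filter fun i : Fin r => w ∈ A i).Nonempty :=
        ⟨0, by simp [hw]⟩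
      rw [dif_pos hne']
      have h0 : (0 : Fin r) ∈ univ.filter fun i : Fin r => w ∈ A i := by simp [hw]
      have := Finset.min'_le _ _ h0
      exact le_antisymm this (Fin.zero_le _)
    · -- hj
      intro g hg
      simp only [mem_filter, mem_univ, true_and] at hg
      obtain ⟨v, hv⟩ := hg
      simp only [mem_filter]
      have hsub : ∀ i, ((F.attach.filter fun v => g v ≤ i).image Subtype.val) ⊆ F := by
        intro i x hx
        simp only [mem_image, mem_filter, mem_attach, true_and] at hx
        obtain ⟨w, _, rfl⟩ := hx
        exact w.2
      constructor
      · rw [hmemS]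
        refine ⟨fun i => ⟨hdown F hF.1 _ (hsub i), ?_⟩, ?_⟩
        · apply Finset.nonempty_iff_ne_empty.1
          exact ⟨v.1, by
            simp only [mem_image, mem_filter, mem_attach, true_and]
            exact ⟨v, by rw [hv]; exact Fin.zero_le _, rfl⟩⟩
        · intro i j hij x hx
          simp only [mem_image, mem_filter, mem_attach, true_and] at hx ⊢
          obtain ⟨w, hw, rfl⟩ := hx
          exact ⟨w, le_trans hw hij, rfl⟩
      · ext x
        simp only [mem_image, mem_filter, mem_attach, true_and]
        constructor
        · rintro ⟨w, _, rfl⟩; exact w.2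
        · intro hx; exact ⟨⟨x, hx⟩, hLe _, rfl⟩
    · -- left inverse
      intro A hA
      simp only [mem_filter] at hA
      obtain ⟨hAS, hAL⟩ := hA
      rw [hmemS] at hAS
      obtain ⟨hne, hmono⟩ := hAS
      funext i
      ext x
      simp only [mem_image, mem_filter, mem_attach, true_and]
      constructor
      · rintro ⟨w, hw, rfl⟩
        have hwF : w.1 ∈ A L := hAL ▸ w.2
        have hne' : (univ.filter fun i : Fin r => w.1 ∈ A i).Nonempty :=
          ⟨L, by simp [hwF]⟩
        rw [dif_pos hne'] at hw
        have hmin : (univ.filter fun i : Fin r => w.1 ∈ A i).min' hne'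
            ∈ univ.filter fun i : Fin r => w.1 ∈ A i := Finset.min'_mem _ _
        simp only [mem_filter, mem_univ, true_and] at hmin
        exact hmono _ i hw hmin
      · intro hx
        have hxF : x ∈ F := hAL ▸ hmono i L (hLe i) hx
        refine ⟨⟨x, hxF⟩, ?_, rfl⟩
        have hne' : (univ.filter fun j : Fin r => x ∈ A j).Nonempty :=
          ⟨i, by simp [hx]⟩
        rw [dif_pos hne']
        exact Finset.min'_le _ _ (by simp [hx])
    · -- right inverse
      intro g hg
      funext v
      have hmem : ∀ i : Fin r,
          (v.1 ∈ (F.attach.filter fun w => g w ≤ i).image Subtype.val) ↔ g v ≤ i := by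
        intro i
        simp only [mem_image, mem_filter, mem_attach, true_and]
        constructor
        · rintro ⟨w, hw, hwv⟩
          have : w = v := Subtype.ext hwv
          rwa [this] at hw
        · intro h; exact ⟨v, h, rfl⟩
      have hne' : (univ.filter fun i : Fin r =>
          v.1 ∈ (F.attach.filter fun w => g w ≤ i).image Subtype.val).Nonempty :=
        ⟨g v, by simp [hmem]⟩
      rw [dif_pos hne']
      apply le_antisymm
      · exact Finset.min'_le _ _ (by simp [hmem])
      · apply Finset.le_min'
        intro y hy
        simp only [mem_filter, mem_univ, true_and, hmem] at hy
        exact hy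
  -- counting functions
  have h4 : ∀ F : Finset V,
      (univ.filter fun g : {x // x ∈ F} → Fin r => ∃ v, g v = 0).card
        + (r - 1) ^ F.card = r ^ F.card := by
    intro F
    have hc := Finset.card_filter_add_card_filter_not
      (s := (univ : Finset ({x // x ∈ F} → Fin r))) (fun g => ∃ v, g v = 0)
    have huniv : (univ : Finset ({x // x ∈ F} → Fin r)).card = r ^ F.card := by
      rw [card_univ, Fintype.card_fun, Fintype.card_coe, Fintype.card_fin]
    have hneg : (univ.filter fun g : {x // x ∈ F} → Fin r => ¬ ∃ v, g v = 0).card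
        = (r - 1) ^ F.card := by
      have e1 : (univ.filter fun g : {x // x ∈ F} → Fin r => ¬ ∃ v, g v = 0).card
          = Fintype.card {g : {x // x ∈ F} → Fin r // ∀ v, g v ≠ 0} := by
        rw [Fintype.card_subtype]
        congr 1
        apply Finset.filter_congr
        intro g _
        push_neg
        simp
      rw [e1, Fintype.card_congr (Equiv.subtypePiEquivPi (p := fun _ (b : Fin r) => b ≠ 0))]
      rw [Fintype.card_pi]
      have : Fintype.card {b : Fin r // b ≠ 0} = r - 1 := by
        rw [Fintype.card_subtype_compl, Fintype.card_fin, Fintype.card_subtype_eq]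
      simp [this, Finset.prod_const, Fintype.card_coe]
    rw [hneg, huniv] at hc
    exact hc
  -- assemble
  rw [h1, h2]
  push_cast
  have key : ∀ F ∈ t, ((S.filter fun A => A L = F).card : ℤ)
      = (r : ℤ) ^ F.card - ((r : ℤ) - 1) ^ F.card := by
    intro F hF
    rw [h3 F hF]
    have := h4 F
    have hcast : (((r - 1 : ℕ)) : ℤ) = (r : ℤ) - 1 := Nat.cast_pred hr
    have := congrArg (Nat.cast : ℕ → ℤ) this
    push_cast at this
    rw [hcast] at this
    linarith
  rw [Finset.sum_congr rfl key]
  have h5 : ∑ F ∈ t, ((r : ℤ) ^ F.card - ((r : ℤ) - 1) ^ F.card)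
      = ∑ F ∈ Δ, ((r : ℤ) ^ F.card - ((r : ℤ) - 1) ^ F.card) := by
    rw [← Finset.sum_filter_add_sum_filter_not Δ (fun F => F ≠ ∅)]
    have : ∑ F ∈ Δ.filter (fun F => ¬ F ≠ ∅),
        ((r : ℤ) ^ F.card - ((r : ℤ) - 1) ^ F.card) = 0 := by
      apply Finset.sum_eq_zero
      intro F hF
      simp only [mem_filter, not_not] at hF
      rw [hF.2]
      simp
    rw [this, add_zero]
  rw [h5]
  rw [← Finset.sum_fiberwise_of_maps_to (g := fun F => F.card)
    (fun F hF => mem_range.2 (Nat.lt_succ_of_le (hdim F hF)))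
    (fun F => (r : ℤ) ^ F.card - ((r : ℤ) - 1) ^ F.card)]
  apply Finset.sum_congr rfl
  intro l _
  rw [Finset.sum_congr rfl (fun F hF => by
    simp only [mem_filter] at hF
    rw [hF.2])]
  rw [Finset.sum_const, nsmul_eq_mul, mul_comm]
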